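/- Let {q_s, |s⟩} be a complex projective 3-design in dimension d, let |ψ⟩ and |φ⟩ be unit vectors with f = |⟨φ|ψ⟩|², and define the estimator f̂(s) = (d+1)|⟨φ|s⟩|² − 1 for outcome s drawn with probability q_s d ⟨s|ψ⟩⟨ψ|s⟩ (the shadow estimator of fidelity). Then E[f̂] = f, and the variance satisfies E[(f̂ − f)²] = 2(d+1)(1+2f)/(d+2) − (1+f)². -/

import Mathlib

open Matrix

lemma tripleFactor {d : ℕ} (f g h : Fin d → ℂ) :
    ∑ (i : Fin d × Fin d × Fin d), f i.1 * g i.2.1 * h i.2.2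
    = (∑ i, f i) * (∑ i, g i) * (∑ i, h i) := by
  rw [Fintype.sum_prod_type]
  simp_rw [Fintype.sum_prod_type]
  rw [Finset.sum_mul_sum (Finset.univ) (Finset.univ) f g]
  rw [Finset.sum_mul]
  simp_rw [Finset.sum_mul, Finset.mul_sum]

lemma sum2fac {α β : Type*} [Fintype α] [Fintype β] (c : ℂ) (F : α → ℂ) (G : β → ℂ) :
    ∑ a, ∑ b, c * F a * G b = c * (∑ a, F a) * (∑ b, G b) := by
  rw [mul_assoc, Finset.sum_mul_sum (Finset.univ) (Finset.univ) F G, Finset.mul_sum]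
  apply Finset.sum_congr rfl
  intro a _
  rw [Finset.mul_sum]
  apply Finset.sum_congr rfl
  intro b _
  ring

lemma deltaSum {d : ℕ} (c0 : ℂ) (F G H : Fin d → ℂ)
    (P : Fin d × Fin d × Fin d → Prop) [DecidablePred P] (a b c : Fin d)
    (h : ∀ j, P j ↔ (a = j.1 ∧ b = j.2.1 ∧ c = j.2.2)) :
    ∑ j : Fin d × Fin d × Fin d,
      c0 * (F j.1 * G j.2.1 * H j.2.2 * (if P j then (1:ℂ) else 0))
      = c0 * (F a * G b * H c) := by
  have : ∀ j : Fin d × Fin d × Fin d,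
      c0 * (F j.1 * G j.2.1 * H j.2.2 * (if P j then (1:ℂ) else 0)) =
      c0 * (F j.1 * G j.2.1 * H j.2.2 *
        (if a = j.1 ∧ b = j.2.1 ∧ c = j.2.2 then (1:ℂ) else 0)) := by
    intro j; rw [if_congr (h j) rfl rfl]
  rw [Finset.sum_congr rfl fun j _ => this j]
  simp [Fintype.sum_prod_type, ite_and, mul_ite, mul_one, mul_zero, Finset.sum_ite_eq,
    Finset.mul_sum]

lemma design_contract {d : ℕ} {ι : Type*} [Fintype ι]
    (q : ι → ℝ) (ψs : ι → Fin d → ℂ)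
    (hdesign : ∑ s, (q s : ℂ) •
        Matrix.of (fun (i j : Fin d × Fin d × Fin d) =>
          ψs s i.1 * ψs s i.2.1 * ψs s i.2.2 *
          star (ψs s j.1) * star (ψs s j.2.1) * star (ψs s j.2.2)) =
      ((d : ℂ) * ((d : ℂ) + 1) * ((d : ℂ) + 2))⁻¹ •
        Matrix.of (fun (i j : Fin d × Fin d × Fin d) =>
          (if i.1 = j.1 ∧ i.2.1 = j.2.1 ∧ i.2.2 = j.2.2 then (1:ℂ) else 0) +
          (if i.1 = j.1 ∧ i.2.1 = j.2.2 ∧ i.2.2 = j.2.1 then (1:ℂ) else 0) +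
          (if i.1 = j.2.1 ∧ i.2.1 = j.1 ∧ i.2.2 = j.2.2 then (1:ℂ) else 0) +
          (if i.1 = j.2.1 ∧ i.2.1 = j.2.2 ∧ i.2.2 = j.1 then (1:ℂ) else 0) +
          (if i.1 = j.2.2 ∧ i.2.1 = j.1 ∧ i.2.2 = j.2.1 then (1:ℂ) else 0) +
          (if i.1 = j.2.2 ∧ i.2.1 = j.2.1 ∧ i.2.2 = j.1 then (1:ℂ) else 0)))
    (U V W X Y Z : Fin d → ℂ) :
    ∑ s, (q s : ℂ) * ((star U ⬝ᵥ ψs s) * (star V ⬝ᵥ ψs s) * (star W ⬝ᵥ ψs s) *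
      star (star X ⬝ᵥ ψs s) * star (star Y ⬝ᵥ ψs s) * star (star Z ⬝ᵥ ψs s)) =
    ((d : ℂ) * ((d : ℂ) + 1) * ((d : ℂ) + 2))⁻¹ *
      ((star U ⬝ᵥ X) * (star V ⬝ᵥ Y) * (star W ⬝ᵥ Z) +
       (star U ⬝ᵥ X) * (star V ⬝ᵥ Z) * (star W ⬝ᵥ Y) +
       (star U ⬝ᵥ Y) * (star V ⬝ᵥ X) * (star W ⬝ᵥ Z) +
       (star U ⬝ᵥ Y) * (star V ⬝ᵥ Z) * (star W ⬝ᵥ X) +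
       (star U ⬝ᵥ Z) * (star V ⬝ᵥ X) * (star W ⬝ᵥ Y) +
       (star U ⬝ᵥ Z) * (star V ⬝ᵥ Y) * (star W ⬝ᵥ X)) := by
  set N : ℂ := ((d : ℂ) * ((d : ℂ) + 1) * ((d : ℂ) + 2))⁻¹ with hN
  have hT := congrArg (fun M : Matrix (Fin d × Fin d × Fin d) (Fin d × Fin d × Fin d) ℂ =>
    ∑ i, ∑ j, (star (U i.1) * star (V i.2.1) * star (W i.2.2) *
      (X j.1 * Y j.2.1 * Z j.2.2)) * M i j) hdesign
  simp only [Matrix.sum_apply, Matrix.smul_apply, Matrix.of_apply, smul_eq_mul] at hT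
  have e1 : (∑ i : Fin d × Fin d × Fin d, ∑ j : Fin d × Fin d × Fin d,
      (star (U i.1) * star (V i.2.1) * star (W i.2.2) * (X j.1 * Y j.2.1 * Z j.2.2)) *
        (∑ s, (q s : ℂ) *
          (ψs s i.1 * ψs s i.2.1 * ψs s i.2.2 *
          star (ψs s j.1) * star (ψs s j.2.1) * star (ψs s j.2.2)))) =
      ∑ s, (q s : ℂ) * ((star U ⬝ᵥ ψs s) * (star V ⬝ᵥ ψs s) * (star W ⬝ᵥ ψs s) *
      star (star X ⬝ᵥ ψs s) * star (star Y ⬝ᵥ ψs s) * star (star Z ⬝ᵥ ψs s)) := by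
    simp_rw [Finset.mul_sum]
    rw [Finset.sum_congr rfl fun i _ => Finset.sum_comm, Finset.sum_comm]
    apply Finset.sum_congr rfl
    intro s _
    calc ∑ i : Fin d × Fin d × Fin d, ∑ j : Fin d × Fin d × Fin d,
        (star (U i.1) * star (V i.2.1) * star (W i.2.2) * (X j.1 * Y j.2.1 * Z j.2.2)) *
          ((q s : ℂ) * (ψs s i.1 * ψs s i.2.1 * ψs s i.2.2 *
            star (ψs s j.1) * star (ψs s j.2.1) * star (ψs s j.2.2)))
        = ∑ i : Fin d × Fin d × Fin d, ∑ j : Fin d × Fin d × Fin d,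
          (q s : ℂ) * ((fun i : Fin d × Fin d × Fin d =>
              (star (U i.1) * ψs s i.1) * (star (V i.2.1) * ψs s i.2.1) *
              (star (W i.2.2) * ψs s i.2.2)) i) *
            ((fun j : Fin d × Fin d × Fin d =>
              (X j.1 * star (ψs s j.1)) * (Y j.2.1 * star (ψs s j.2.1)) *
              (Z j.2.2 * star (ψs s j.2.2))) j) := by
          apply Finset.sum_congr rfl; intro i _
          apply Finset.sum_congr rfl; intro j _
          ring
      _ = (q s : ℂ) * (∑ i : Fin d × Fin d × Fin d,
              (star (U i.1) * ψs s i.1) * (star (V i.2.1) * ψs s i.2.1) *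
              (star (W i.2.2) * ψs s i.2.2)) *
            (∑ j : Fin d × Fin d × Fin d,
              (X j.1 * star (ψs s j.1)) * (Y j.2.1 * star (ψs s j.2.1)) *
              (Z j.2.2 * star (ψs s j.2.2))) := sum2fac _ _ _
      _ = (q s : ℂ) * ((star U ⬝ᵥ ψs s) * (star V ⬝ᵥ ψs s) * (star W ⬝ᵥ ψs s)) *
            (star (star X ⬝ᵥ ψs s) * star (star Y ⬝ᵥ ψs s) * star (star Z ⬝ᵥ ψs s)) := by
          rw [tripleFactor (fun x => star (U x) * ψs s x) (fun x => star (V x) * ψs s x)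
            (fun x => star (W x) * ψs s x),
            tripleFactor (fun x => X x * star (ψs s x)) (fun x => Y x * star (ψs s x))
            (fun x => Z x * star (ψs s x))]
          simp only [dotProduct, Pi.star_apply, star_sum, star_mul', star_star]
      _ = (q s : ℂ) * ((star U ⬝ᵥ ψs s) * (star V ⬝ᵥ ψs s) * (star W ⬝ᵥ ψs s) *
            star (star X ⬝ᵥ ψs s) * star (star Y ⬝ᵥ ψs s) * star (star Z ⬝ᵥ ψs s)) := by ring
  have hA1 : (∑ i : Fin d × Fin d × Fin d, ∑ j : Fin d × Fin d × Fin d,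
      (N * (star (U i.1) * star (V i.2.1) * star (W i.2.2))) *
      (X j.1 * Y j.2.1 * Z j.2.2 * (if i.1 = j.1 ∧ i.2.1 = j.2.1 ∧ i.2.2 = j.2.2 then (1:ℂ) else 0)))
      = N * ((star U ⬝ᵥ X) * (star V ⬝ᵥ Y) * (star W ⬝ᵥ Z)) := by
    rw [Finset.sum_congr rfl fun i _ => deltaSum
      (N * (star (U i.1) * star (V i.2.1) * star (W i.2.2))) X Y Z
      (fun j => i.1 = j.1 ∧ i.2.1 = j.2.1 ∧ i.2.2 = j.2.2) i.1 i.2.1 i.2.2 (fun j => by tauto)]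
    calc (∑ i : Fin d × Fin d × Fin d,
        (N * (star (U i.1) * star (V i.2.1) * star (W i.2.2))) * (X i.1 * Y i.2.1 * Z i.2.2))
        = ∑ i : Fin d × Fin d × Fin d, N *
          ((star (U i.1) * X i.1) * (star (V i.2.1) * Y i.2.1) *
            (star (W i.2.2) * Z i.2.2)) := by
          apply Finset.sum_congr rfl; intro i _; ring
      _ = N * ((star U ⬝ᵥ X) * (star V ⬝ᵥ Y) * (star W ⬝ᵥ Z)) := by
          rw [← Finset.mul_sum, tripleFactor (fun x => star (U x) * X x)
            (fun x => star (V x) * Y x) (fun x => star (W x) * Z x)]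
          simp only [dotProduct, Pi.star_apply]

  have hA2 : (∑ i : Fin d × Fin d × Fin d, ∑ j : Fin d × Fin d × Fin d,
      (N * (star (U i.1) * star (V i.2.1) * star (W i.2.2))) *
      (X j.1 * Y j.2.1 * Z j.2.2 * (if i.1 = j.1 ∧ i.2.1 = j.2.2 ∧ i.2.2 = j.2.1 then (1:ℂ) else 0)))
      = N * ((star U ⬝ᵥ X) * (star V ⬝ᵥ Z) * (star W ⬝ᵥ Y)) := by
    rw [Finset.sum_congr rfl fun i _ => deltaSum
      (N * (star (U i.1) * star (V i.2.1) * star (W i.2.2))) X Y Z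
      (fun j => i.1 = j.1 ∧ i.2.1 = j.2.2 ∧ i.2.2 = j.2.1) i.1 i.2.2 i.2.1 (fun j => by tauto)]
    calc (∑ i : Fin d × Fin d × Fin d,
        (N * (star (U i.1) * star (V i.2.1) * star (W i.2.2))) * (X i.1 * Y i.2.2 * Z i.2.1))
        = ∑ i : Fin d × Fin d × Fin d, N *
          ((star (U i.1) * X i.1) * (star (V i.2.1) * Z i.2.1) *
            (star (W i.2.2) * Y i.2.2)) := by
          apply Finset.sum_congr rfl; intro i _; ring
      _ = N * ((star U ⬝ᵥ X) * (star V ⬝ᵥ Z) * (star W ⬝ᵥ Y)) := by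
          rw [← Finset.mul_sum, tripleFactor (fun x => star (U x) * X x)
            (fun x => star (V x) * Z x) (fun x => star (W x) * Y x)]
          simp only [dotProduct, Pi.star_apply]

  have hA3 : (∑ i : Fin d × Fin d × Fin d, ∑ j : Fin d × Fin d × Fin d,
      (N * (star (U i.1) * star (V i.2.1) * star (W i.2.2))) *
      (X j.1 * Y j.2.1 * Z j.2.2 * (if i.1 = j.2.1 ∧ i.2.1 = j.1 ∧ i.2.2 = j.2.2 then (1:ℂ) else 0)))
      = N * ((star U ⬝ᵥ Y) * (star V ⬝ᵥ X) * (star W ⬝ᵥ Z)) := by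
    rw [Finset.sum_congr rfl fun i _ => deltaSum
      (N * (star (U i.1) * star (V i.2.1) * star (W i.2.2))) X Y Z
      (fun j => i.1 = j.2.1 ∧ i.2.1 = j.1 ∧ i.2.2 = j.2.2) i.2.1 i.1 i.2.2 (fun j => by tauto)]
    calc (∑ i : Fin d × Fin d × Fin d,
        (N * (star (U i.1) * star (V i.2.1) * star (W i.2.2))) * (X i.2.1 * Y i.1 * Z i.2.2))
        = ∑ i : Fin d × Fin d × Fin d, N *
          ((star (U i.1) * Y i.1) * (star (V i.2.1) * X i.2.1) *
            (star (W i.2.2) * Z i.2.2)) := by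
          apply Finset.sum_congr rfl; intro i _; ring
      _ = N * ((star U ⬝ᵥ Y) * (star V ⬝ᵥ X) * (star W ⬝ᵥ Z)) := by
          rw [← Finset.mul_sum, tripleFactor (fun x => star (U x) * Y x)
            (fun x => star (V x) * X x) (fun x => star (W x) * Z x)]
          simp only [dotProduct, Pi.star_apply]

  have hA4 : (∑ i : Fin d × Fin d × Fin d, ∑ j : Fin d × Fin d × Fin d,
      (N * (star (U i.1) * star (V i.2.1) * star (W i.2.2))) *
      (X j.1 * Y j.2.1 * Z j.2.2 * (if i.1 = j.2.1 ∧ i.2.1 = j.2.2 ∧ i.2.2 = j.1 then (1:ℂ) else 0)))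
      = N * ((star U ⬝ᵥ Y) * (star V ⬝ᵥ Z) * (star W ⬝ᵥ X)) := by
    rw [Finset.sum_congr rfl fun i _ => deltaSum
      (N * (star (U i.1) * star (V i.2.1) * star (W i.2.2))) X Y Z
      (fun j => i.1 = j.2.1 ∧ i.2.1 = j.2.2 ∧ i.2.2 = j.1) i.2.2 i.1 i.2.1 (fun j => by tauto)]
    calc (∑ i : Fin d × Fin d × Fin d,
        (N * (star (U i.1) * star (V i.2.1) * star (W i.2.2))) * (X i.2.2 * Y i.1 * Z i.2.1))
        = ∑ i : Fin d × Fin d × Fin d, N *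
          ((star (U i.1) * Y i.1) * (star (V i.2.1) * Z i.2.1) *
            (star (W i.2.2) * X i.2.2)) := by
          apply Finset.sum_congr rfl; intro i _; ring
      _ = N * ((star U ⬝ᵥ Y) * (star V ⬝ᵥ Z) * (star W ⬝ᵥ X)) := by
          rw [← Finset.mul_sum, tripleFactor (fun x => star (U x) * Y x)
            (fun x => star (V x) * Z x) (fun x => star (W x) * X x)]
          simp only [dotProduct, Pi.star_apply]

  have hA5 : (∑ i : Fin d × Fin d × Fin d, ∑ j : Fin d × Fin d × Fin d,
      (N * (star (U i.1) * star (V i.2.1) * star (W i.2.2))) *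
      (X j.1 * Y j.2.1 * Z j.2.2 * (if i.1 = j.2.2 ∧ i.2.1 = j.1 ∧ i.2.2 = j.2.1 then (1:ℂ) else 0)))
      = N * ((star U ⬝ᵥ Z) * (star V ⬝ᵥ X) * (star W ⬝ᵥ Y)) := by
    rw [Finset.sum_congr rfl fun i _ => deltaSum
      (N * (star (U i.1) * star (V i.2.1) * star (W i.2.2))) X Y Z
      (fun j => i.1 = j.2.2 ∧ i.2.1 = j.1 ∧ i.2.2 = j.2.1) i.2.1 i.2.2 i.1 (fun j => by tauto)]
    calc (∑ i : Fin d × Fin d × Fin d,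
        (N * (star (U i.1) * star (V i.2.1) * star (W i.2.2))) * (X i.2.1 * Y i.2.2 * Z i.1))
        = ∑ i : Fin d × Fin d × Fin d, N *
          ((star (U i.1) * Z i.1) * (star (V i.2.1) * X i.2.1) *
            (star (W i.2.2) * Y i.2.2)) := by
          apply Finset.sum_congr rfl; intro i _; ring
      _ = N * ((star U ⬝ᵥ Z) * (star V ⬝ᵥ X) * (star W ⬝ᵥ Y)) := by
          rw [← Finset.mul_sum, tripleFactor (fun x => star (U x) * Z x)
            (fun x => star (V x) * X x) (fun x => star (W x) * Y x)]
          simp only [dotProduct, Pi.star_apply]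

  have hA6 : (∑ i : Fin d × Fin d × Fin d, ∑ j : Fin d × Fin d × Fin d,
      (N * (star (U i.1) * star (V i.2.1) * star (W i.2.2))) *
      (X j.1 * Y j.2.1 * Z j.2.2 * (if i.1 = j.2.2 ∧ i.2.1 = j.2.1 ∧ i.2.2 = j.1 then (1:ℂ) else 0)))
      = N * ((star U ⬝ᵥ Z) * (star V ⬝ᵥ Y) * (star W ⬝ᵥ X)) := by
    rw [Finset.sum_congr rfl fun i _ => deltaSum
      (N * (star (U i.1) * star (V i.2.1) * star (W i.2.2))) X Y Z
      (fun j => i.1 = j.2.2 ∧ i.2.1 = j.2.1 ∧ i.2.2 = j.1) i.2.2 i.2.1 i.1 (fun j => by tauto)]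
    calc (∑ i : Fin d × Fin d × Fin d,
        (N * (star (U i.1) * star (V i.2.1) * star (W i.2.2))) * (X i.2.2 * Y i.2.1 * Z i.1))
        = ∑ i : Fin d × Fin d × Fin d, N *
          ((star (U i.1) * Z i.1) * (star (V i.2.1) * Y i.2.1) *
            (star (W i.2.2) * X i.2.2)) := by
          apply Finset.sum_congr rfl; intro i _; ring
      _ = N * ((star U ⬝ᵥ Z) * (star V ⬝ᵥ Y) * (star W ⬝ᵥ X)) := by
          rw [← Finset.mul_sum, tripleFactor (fun x => star (U x) * Z x)
            (fun x => star (V x) * Y x) (fun x => star (W x) * X x)]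
          simp only [dotProduct, Pi.star_apply]


  have e2 : (∑ i : Fin d × Fin d × Fin d, ∑ j : Fin d × Fin d × Fin d,
      (star (U i.1) * star (V i.2.1) * star (W i.2.2) * (X j.1 * Y j.2.1 * Z j.2.2)) *
        (N * ((if i.1 = j.1 ∧ i.2.1 = j.2.1 ∧ i.2.2 = j.2.2 then (1:ℂ) else 0) +
          (if i.1 = j.1 ∧ i.2.1 = j.2.2 ∧ i.2.2 = j.2.1 then (1:ℂ) else 0) +
          (if i.1 = j.2.1 ∧ i.2.1 = j.1 ∧ i.2.2 = j.2.2 then (1:ℂ) else 0) +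
          (if i.1 = j.2.1 ∧ i.2.1 = j.2.2 ∧ i.2.2 = j.1 then (1:ℂ) else 0) +
          (if i.1 = j.2.2 ∧ i.2.1 = j.1 ∧ i.2.2 = j.2.1 then (1:ℂ) else 0) +
          (if i.1 = j.2.2 ∧ i.2.1 = j.2.1 ∧ i.2.2 = j.1 then (1:ℂ) else 0)))) =
      N * ((star U ⬝ᵥ X) * (star V ⬝ᵥ Y) * (star W ⬝ᵥ Z) +
       (star U ⬝ᵥ X) * (star V ⬝ᵥ Z) * (star W ⬝ᵥ Y) +
       (star U ⬝ᵥ Y) * (star V ⬝ᵥ X) * (star W ⬝ᵥ Z) +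
       (star U ⬝ᵥ Y) * (star V ⬝ᵥ Z) * (star W ⬝ᵥ X) +
       (star U ⬝ᵥ Z) * (star V ⬝ᵥ X) * (star W ⬝ᵥ Y) +
       (star U ⬝ᵥ Z) * (star V ⬝ᵥ Y) * (star W ⬝ᵥ X)) := by
    have split : ∀ (i j : Fin d × Fin d × Fin d),
        (star (U i.1) * star (V i.2.1) * star (W i.2.2) * (X j.1 * Y j.2.1 * Z j.2.2)) *
        (N * ((if i.1 = j.1 ∧ i.2.1 = j.2.1 ∧ i.2.2 = j.2.2 then (1:ℂ) else 0) +
          (if i.1 = j.1 ∧ i.2.1 = j.2.2 ∧ i.2.2 = j.2.1 then (1:ℂ) else 0) +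
          (if i.1 = j.2.1 ∧ i.2.1 = j.1 ∧ i.2.2 = j.2.2 then (1:ℂ) else 0) +
          (if i.1 = j.2.1 ∧ i.2.1 = j.2.2 ∧ i.2.2 = j.1 then (1:ℂ) else 0) +
          (if i.1 = j.2.2 ∧ i.2.1 = j.1 ∧ i.2.2 = j.2.1 then (1:ℂ) else 0) +
          (if i.1 = j.2.2 ∧ i.2.1 = j.2.1 ∧ i.2.2 = j.1 then (1:ℂ) else 0))) =
        (N * (star (U i.1) * star (V i.2.1) * star (W i.2.2))) *
          (X j.1 * Y j.2.1 * Z j.2.2 * (if i.1 = j.1 ∧ i.2.1 = j.2.1 ∧ i.2.2 = j.2.2 then (1:ℂ) else 0)) +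
        (N * (star (U i.1) * star (V i.2.1) * star (W i.2.2))) *
          (X j.1 * Y j.2.1 * Z j.2.2 * (if i.1 = j.1 ∧ i.2.1 = j.2.2 ∧ i.2.2 = j.2.1 then (1:ℂ) else 0)) +
        (N * (star (U i.1) * star (V i.2.1) * star (W i.2.2))) *
          (X j.1 * Y j.2.1 * Z j.2.2 * (if i.1 = j.2.1 ∧ i.2.1 = j.1 ∧ i.2.2 = j.2.2 then (1:ℂ) else 0)) +
        (N * (star (U i.1) * star (V i.2.1) * star (W i.2.2))) *
          (X j.1 * Y j.2.1 * Z j.2.2 * (if i.1 = j.2.1 ∧ i.2.1 = j.2.2 ∧ i.2.2 = j.1 then (1:ℂ) else 0)) +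
        (N * (star (U i.1) * star (V i.2.1) * star (W i.2.2))) *
          (X j.1 * Y j.2.1 * Z j.2.2 * (if i.1 = j.2.2 ∧ i.2.1 = j.1 ∧ i.2.2 = j.2.1 then (1:ℂ) else 0)) +
        (N * (star (U i.1) * star (V i.2.1) * star (W i.2.2))) *
          (X j.1 * Y j.2.1 * Z j.2.2 * (if i.1 = j.2.2 ∧ i.2.1 = j.2.1 ∧ i.2.2 = j.1 then (1:ℂ) else 0)) := by
      intro i j; ring
    rw [Finset.sum_congr rfl fun i _ => Finset.sum_congr rfl fun j _ => split i j]
    simp_rw [Finset.sum_add_distrib]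
    rw [hA1, hA2, hA3, hA4, hA5, hA6]
    ring
  exact (e1.symm.trans hT).trans e2

lemma starDP {d : ℕ} (v w : Fin d → ℂ) : star (star v ⬝ᵥ w) = star w ⬝ᵥ v := by
  rw [star_dotProduct]; simp

lemma mulStarSelf (z : ℂ) : z * star z = (Complex.normSq z : ℂ) := by
  rw [Complex.star_def, Complex.mul_conj]

lemma normSqStar (z : ℂ) : Complex.normSq (star z) = Complex.normSq z := by
  rw [Complex.star_def, Complex.normSq_conj]

/-- For a complex projective 3-design `{q_s, |s⟩}` in dimension `d`, unit
vectors `|ψ⟩, |φ⟩` with `f = |⟨φ|ψ⟩|²`, and the shadow fidelity estimator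
`f̂(s) = (d+1)|⟨φ|s⟩|² − 1` for outcome `s` occurring with probability
`p_s = q_s d |⟨s|ψ⟩|²`, the estimator is unbiased, `E[f̂] = f`, and its
variance is `E[(f̂−f)²] = 2(d+1)(1+2f)/(d+2) − (1+f)²`. -/
theorem stmt18 {d : ℕ} (hd : 0 < d) {ι : Type*} [Fintype ι]
    (q : ι → ℝ) (ψs : ι → Fin d → ℂ)
    (hq : ∀ s, 0 < q s) (hsum : ∑ s, q s = 1)
    (hunit : ∀ s, star (ψs s) ⬝ᵥ ψs s = 1)
    (hdesign : ∑ s, (q s : ℂ) •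
        Matrix.of (fun (i j : Fin d × Fin d × Fin d) =>
          ψs s i.1 * ψs s i.2.1 * ψs s i.2.2 *
          star (ψs s j.1) * star (ψs s j.2.1) * star (ψs s j.2.2)) =
      ((d : ℂ) * ((d : ℂ) + 1) * ((d : ℂ) + 2))⁻¹ •
        Matrix.of (fun (i j : Fin d × Fin d × Fin d) =>
          (if i.1 = j.1 ∧ i.2.1 = j.2.1 ∧ i.2.2 = j.2.2 then (1:ℂ) else 0) +
          (if i.1 = j.1 ∧ i.2.1 = j.2.2 ∧ i.2.2 = j.2.1 then (1:ℂ) else 0) +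
          (if i.1 = j.2.1 ∧ i.2.1 = j.1 ∧ i.2.2 = j.2.2 then (1:ℂ) else 0) +
          (if i.1 = j.2.1 ∧ i.2.1 = j.2.2 ∧ i.2.2 = j.1 then (1:ℂ) else 0) +
          (if i.1 = j.2.2 ∧ i.2.1 = j.1 ∧ i.2.2 = j.2.1 then (1:ℂ) else 0) +
          (if i.1 = j.2.2 ∧ i.2.1 = j.2.1 ∧ i.2.2 = j.1 then (1:ℂ) else 0)))
    (ψ φ : Fin d → ℂ)
    (hψ : star ψ ⬝ᵥ ψ = 1) (hφ : star φ ⬝ᵥ φ = 1)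
    (f : ℝ) (hf : f = Complex.normSq (star φ ⬝ᵥ ψ))
    (fhat : ι → ℝ)
    (hfhat : fhat = fun s => ((d : ℝ) + 1) * Complex.normSq (star φ ⬝ᵥ ψs s) - 1)
    (p : ι → ℝ)
    (hp : p = fun s => q s * d * Complex.normSq (star (ψs s) ⬝ᵥ ψ)) :
    ∑ s, p s * fhat s = f ∧
    ∑ s, p s * (fhat s - f) ^ 2 =
      2 * ((d : ℝ) + 1) * (1 + 2 * f) / ((d : ℝ) + 2) - (1 + f) ^ 2 := by
  have hd0 : (d:ℝ) ≠ 0 := Nat.cast_ne_zero.mpr hd.ne'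
  have hd1 : (d:ℝ) + 1 ≠ 0 := by positivity
  have hd2 : (d:ℝ) + 2 ≠ 0 := by positivity
  have hdc0 : (d:ℂ) ≠ 0 := Nat.cast_ne_zero.mpr hd.ne'
  have hdc1 : (d:ℂ) + 1 ≠ 0 := by
    have : ((d+1:ℕ):ℂ) ≠ 0 := Nat.cast_ne_zero.mpr (by omega)
    push_cast at this; exact this
  have hdc2 : (d:ℂ) + 2 ≠ 0 := by
    have : ((d+2:ℕ):ℂ) ≠ 0 := Nat.cast_ne_zero.mpr (by omega)
    push_cast at this; exact this
  have hu : ∀ s, (∑ k, star (ψs s k) * ψs s k) = (1:ℂ) := fun s => by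
    simpa [dotProduct, Pi.star_apply] using hunit s
  have hψc : (∑ k, star (ψ k) * ψ k) = (1:ℂ) := by
    simpa [dotProduct, Pi.star_apply] using hψ
  have hφc : (∑ k, star (φ k) * φ k) = (1:ℂ) := by
    simpa [dotProduct, Pi.star_apply] using hφ
  have hψφ : (∑ k, star (ψ k) * φ k) = star ψ ⬝ᵥ φ := by
    simp [dotProduct, Pi.star_apply]
  have hφψ : (∑ k, star (φ k) * ψ k) = star φ ⬝ᵥ ψ := by
    simp [dotProduct, Pi.star_apply]
  set E : Fin d → Fin d → ℂ := fun k i => if i = k then 1 else 0 with hE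
  have dE1 : ∀ (x : Fin d → ℂ) (k : Fin d), star x ⬝ᵥ E k = star (x k) := by
    intro x k; simp [dotProduct, Pi.star_apply, mul_ite, hE]
  have dE2 : ∀ (k : Fin d) (x : Fin d → ℂ), star (E k) ⬝ᵥ x = x k := by
    intro k x; simp [dotProduct, Pi.star_apply, apply_ite (star : ℂ → ℂ), ite_mul, hE]
  have dE3 : ∀ (k l : Fin d), star (E k) ⬝ᵥ E l = if k = l then (1:ℂ) else 0 := by
    intro k l
    simp [dotProduct, Pi.star_apply, apply_ite (star : ℂ → ℂ), ite_mul, mul_ite, hE, eq_comm]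
  -- first complex moment identity : ∑ q |⟨ψ|s⟩|² = 1/d
  have C1 : ∑ s, (q s : ℂ) * ((star ψ ⬝ᵥ ψs s) * star (star ψ ⬝ᵥ ψs s)) = ((d:ℂ))⁻¹ := by
    have hKL : (∑ k : Fin d, ∑ l : Fin d, ∑ s, (q s : ℂ) *
        ((star ψ ⬝ᵥ ψs s) * (star (E k) ⬝ᵥ ψs s) * (star (E l) ⬝ᵥ ψs s) *
          star (star ψ ⬝ᵥ ψs s) * star (star (E k) ⬝ᵥ ψs s) * star (star (E l) ⬝ᵥ ψs s))) =
        ∑ k : Fin d, ∑ l : Fin d, ((d : ℂ) * ((d : ℂ) + 1) * ((d : ℂ) + 2))⁻¹ *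
          ((star ψ ⬝ᵥ ψ) * (star (E k) ⬝ᵥ E k) * (star (E l) ⬝ᵥ E l) +
           (star ψ ⬝ᵥ ψ) * (star (E k) ⬝ᵥ E l) * (star (E l) ⬝ᵥ E k) +
           (star ψ ⬝ᵥ E k) * (star (E k) ⬝ᵥ ψ) * (star (E l) ⬝ᵥ E l) +
           (star ψ ⬝ᵥ E k) * (star (E k) ⬝ᵥ E l) * (star (E l) ⬝ᵥ ψ) +
           (star ψ ⬝ᵥ E l) * (star (E k) ⬝ᵥ ψ) * (star (E l) ⬝ᵥ E k) +
           (star ψ ⬝ᵥ E l) * (star (E k) ⬝ᵥ E k) * (star (E l) ⬝ᵥ ψ)) :=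
      Finset.sum_congr rfl fun k _ => Finset.sum_congr rfl fun l _ =>
        design_contract q ψs hdesign ψ (E k) (E l) ψ (E k) (E l)
    have hL : (∑ k : Fin d, ∑ l : Fin d, ∑ s, (q s : ℂ) *
        ((star ψ ⬝ᵥ ψs s) * (star (E k) ⬝ᵥ ψs s) * (star (E l) ⬝ᵥ ψs s) *
          star (star ψ ⬝ᵥ ψs s) * star (star (E k) ⬝ᵥ ψs s) * star (star (E l) ⬝ᵥ ψs s))) =
        ∑ s, (q s : ℂ) * ((star ψ ⬝ᵥ ψs s) * star (star ψ ⬝ᵥ ψs s)) := by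
      simp only [dE2]
      rw [Finset.sum_congr rfl fun k _ => Finset.sum_comm, Finset.sum_comm]
      apply Finset.sum_congr rfl; intro s _
      calc ∑ k : Fin d, ∑ l : Fin d, (q s : ℂ) *
          ((star ψ ⬝ᵥ ψs s) * ψs s k * ψs s l *
            star (star ψ ⬝ᵥ ψs s) * star (ψs s k) * star (ψs s l))
          = ∑ k : Fin d, ∑ l : Fin d,
            ((q s : ℂ) * ((star ψ ⬝ᵥ ψs s) * star (star ψ ⬝ᵥ ψs s))) *
              (star (ψs s k) * ψs s k) * (star (ψs s l) * ψs s l) := by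
            apply Finset.sum_congr rfl; intro k _
            apply Finset.sum_congr rfl; intro l _; ring
        _ = ((q s : ℂ) * ((star ψ ⬝ᵥ ψs s) * star (star ψ ⬝ᵥ ψs s))) *
              (∑ k, star (ψs s k) * ψs s k) * (∑ l, star (ψs s l) * ψs s l) :=
            sum2fac _ _ _
        _ = _ := by rw [hu s]; ring
    have hR : (∑ k : Fin d, ∑ l : Fin d, ((d : ℂ) * ((d : ℂ) + 1) * ((d : ℂ) + 2))⁻¹ *
          ((star ψ ⬝ᵥ ψ) * (star (E k) ⬝ᵥ E k) * (star (E l) ⬝ᵥ E l) +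
           (star ψ ⬝ᵥ ψ) * (star (E k) ⬝ᵥ E l) * (star (E l) ⬝ᵥ E k) +
           (star ψ ⬝ᵥ E k) * (star (E k) ⬝ᵥ ψ) * (star (E l) ⬝ᵥ E l) +
           (star ψ ⬝ᵥ E k) * (star (E k) ⬝ᵥ E l) * (star (E l) ⬝ᵥ ψ) +
           (star ψ ⬝ᵥ E l) * (star (E k) ⬝ᵥ ψ) * (star (E l) ⬝ᵥ E k) +
           (star ψ ⬝ᵥ E l) * (star (E k) ⬝ᵥ E k) * (star (E l) ⬝ᵥ ψ))) = ((d:ℂ))⁻¹ := by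
      simp only [dE3]
      simp only [dE1, dE2, hψ]
      simp only [if_pos rfl, mul_one, one_mul, ← Finset.mul_sum]
      simp only [Finset.sum_add_distrib, mul_ite, ite_mul, mul_one, mul_zero, one_mul, zero_mul,
        Finset.sum_ite_eq, Finset.sum_ite_eq', Finset.mem_univ, if_true, Finset.sum_const,
        Finset.card_univ, Fintype.card_fin, nsmul_eq_mul]
      simp only [← Finset.mul_sum]
      rw [hψc]
      field_simp
      ring
    rw [hL, hR] at hKL
    exact hKL
  -- second complex moment identity
  have C2 : ∑ s, (q s : ℂ) * ((star φ ⬝ᵥ ψs s) * (star ψ ⬝ᵥ ψs s) *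
      star (star φ ⬝ᵥ ψs s) * star (star ψ ⬝ᵥ ψs s)) =
      ((d:ℂ) * ((d:ℂ) + 1))⁻¹ * (1 + (star φ ⬝ᵥ ψ) * (star ψ ⬝ᵥ φ)) := by
    have hK : (∑ k : Fin d, ∑ s, (q s : ℂ) *
        ((star φ ⬝ᵥ ψs s) * (star ψ ⬝ᵥ ψs s) * (star (E k) ⬝ᵥ ψs s) *
          star (star φ ⬝ᵥ ψs s) * star (star ψ ⬝ᵥ ψs s) * star (star (E k) ⬝ᵥ ψs s))) =
        ∑ k : Fin d, ((d : ℂ) * ((d : ℂ) + 1) * ((d : ℂ) + 2))⁻¹ *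
          ((star φ ⬝ᵥ φ) * (star ψ ⬝ᵥ ψ) * (star (E k) ⬝ᵥ E k) +
           (star φ ⬝ᵥ φ) * (star ψ ⬝ᵥ E k) * (star (E k) ⬝ᵥ ψ) +
           (star φ ⬝ᵥ ψ) * (star ψ ⬝ᵥ φ) * (star (E k) ⬝ᵥ E k) +
           (star φ ⬝ᵥ ψ) * (star ψ ⬝ᵥ E k) * (star (E k) ⬝ᵥ φ) +
           (star φ ⬝ᵥ E k) * (star ψ ⬝ᵥ φ) * (star (E k) ⬝ᵥ ψ) +
           (star φ ⬝ᵥ E k) * (star ψ ⬝ᵥ ψ) * (star (E k) ⬝ᵥ φ)) :=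
      Finset.sum_congr rfl fun k _ =>
        design_contract q ψs hdesign φ ψ (E k) φ ψ (E k)
    have hL : (∑ k : Fin d, ∑ s, (q s : ℂ) *
        ((star φ ⬝ᵥ ψs s) * (star ψ ⬝ᵥ ψs s) * (star (E k) ⬝ᵥ ψs s) *
          star (star φ ⬝ᵥ ψs s) * star (star ψ ⬝ᵥ ψs s) * star (star (E k) ⬝ᵥ ψs s))) =
        ∑ s, (q s : ℂ) * ((star φ ⬝ᵥ ψs s) * (star ψ ⬝ᵥ ψs s) *
          star (star φ ⬝ᵥ ψs s) * star (star ψ ⬝ᵥ ψs s)) := by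
      simp only [dE2]
      rw [Finset.sum_comm]
      apply Finset.sum_congr rfl; intro s _
      calc ∑ k : Fin d, (q s : ℂ) *
          ((star φ ⬝ᵥ ψs s) * (star ψ ⬝ᵥ ψs s) * ψs s k *
            star (star φ ⬝ᵥ ψs s) * star (star ψ ⬝ᵥ ψs s) * star (ψs s k))
          = ∑ k : Fin d, ((q s : ℂ) * ((star φ ⬝ᵥ ψs s) * (star ψ ⬝ᵥ ψs s) *
              star (star φ ⬝ᵥ ψs s) * star (star ψ ⬝ᵥ ψs s))) * (star (ψs s k) * ψs s k) := by
            apply Finset.sum_congr rfl; intro k _; ring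
        _ = ((q s : ℂ) * ((star φ ⬝ᵥ ψs s) * (star ψ ⬝ᵥ ψs s) *
              star (star φ ⬝ᵥ ψs s) * star (star ψ ⬝ᵥ ψs s))) *
              (∑ k, star (ψs s k) * ψs s k) := by
            rw [← Finset.mul_sum]
        _ = _ := by rw [hu s]; ring
    have hR : (∑ k : Fin d, ((d : ℂ) * ((d : ℂ) + 1) * ((d : ℂ) + 2))⁻¹ *
          ((star φ ⬝ᵥ φ) * (star ψ ⬝ᵥ ψ) * (star (E k) ⬝ᵥ E k) +
           (star φ ⬝ᵥ φ) * (star ψ ⬝ᵥ E k) * (star (E k) ⬝ᵥ ψ) +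
           (star φ ⬝ᵥ ψ) * (star ψ ⬝ᵥ φ) * (star (E k) ⬝ᵥ E k) +
           (star φ ⬝ᵥ ψ) * (star ψ ⬝ᵥ E k) * (star (E k) ⬝ᵥ φ) +
           (star φ ⬝ᵥ E k) * (star ψ ⬝ᵥ φ) * (star (E k) ⬝ᵥ ψ) +
           (star φ ⬝ᵥ E k) * (star ψ ⬝ᵥ ψ) * (star (E k) ⬝ᵥ φ))) =
        ((d:ℂ) * ((d:ℂ) + 1))⁻¹ * (1 + (star φ ⬝ᵥ ψ) * (star ψ ⬝ᵥ φ)) := by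
      simp only [dE3]
      simp only [dE1, dE2, hψ, hφ]
      simp only [if_pos rfl, mul_one, one_mul, ← Finset.mul_sum]
      simp only [if_true, mul_one, smul_eq_mul, Finset.sum_add_distrib, Finset.sum_const,
        Finset.card_univ, Fintype.card_fin, nsmul_eq_mul]
      have e3' : (∑ _x : Fin d, (star φ ⬝ᵥ ψ) * (star ψ ⬝ᵥ φ)) =
          (d:ℂ) * ((star φ ⬝ᵥ ψ) * (star ψ ⬝ᵥ φ)) := by
        rw [Finset.sum_const, Finset.card_univ, Fintype.card_fin, nsmul_eq_mul]
      have e4' : (∑ k : Fin d, (star φ ⬝ᵥ ψ) * star (ψ k) * φ k) =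
          (star φ ⬝ᵥ ψ) * (star ψ ⬝ᵥ φ) := by
        simp_rw [mul_assoc, ← Finset.mul_sum]
        rw [hψφ]
      have e5' : (∑ k : Fin d, star (φ k) * (star ψ ⬝ᵥ φ) * ψ k) =
          (star φ ⬝ᵥ ψ) * (star ψ ⬝ᵥ φ) := by
        have h5 : ∀ k, star (φ k) * (star ψ ⬝ᵥ φ) * ψ k =
            (star ψ ⬝ᵥ φ) * (star (φ k) * ψ k) := by intro k; ring
        rw [Finset.sum_congr rfl fun k _ => h5 k, ← Finset.mul_sum, hφψ]
        ring
      rw [e4', e5', hψc, hφc]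
      field_simp
      ring
    rw [hL, hR] at hK
    exact hK
  -- third complex moment identity
  have C3 : ∑ s, (q s : ℂ) * ((star φ ⬝ᵥ ψs s) * (star φ ⬝ᵥ ψs s) * (star ψ ⬝ᵥ ψs s) *
      star (star φ ⬝ᵥ ψs s) * star (star φ ⬝ᵥ ψs s) * star (star ψ ⬝ᵥ ψs s)) =
      ((d : ℂ) * ((d : ℂ) + 1) * ((d : ℂ) + 2))⁻¹ *
        (2 + 4 * ((star φ ⬝ᵥ ψ) * (star ψ ⬝ᵥ φ))) := by
    have hK := design_contract q ψs hdesign φ φ ψ φ φ ψ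
    rw [hφ, hψ] at hK
    rw [hK]
    ring
  -- translation to real statements
  have hBstar : ∀ s, star (star ψ ⬝ᵥ ψs s) = star (ψs s) ⬝ᵥ ψ := fun s => starDP ψ (ψs s)
  have hnb : ∀ s, ((Complex.normSq (star (ψs s) ⬝ᵥ ψ) : ℝ) : ℂ) =
      (star ψ ⬝ᵥ ψs s) * star (star ψ ⬝ᵥ ψs s) := by
    intro s
    rw [← hBstar s, normSqStar, mulStarSelf]
  have hcc : (star φ ⬝ᵥ ψ) * (star ψ ⬝ᵥ φ) = ((f : ℝ) : ℂ) := by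
    rw [← starDP φ ψ, mulStarSelf, hf]
  have R1 : ∑ s, q s * Complex.normSq (star (ψs s) ⬝ᵥ ψ) = 1 / (d:ℝ) := by
    have hL : (∑ s, (q s : ℂ) * ((star ψ ⬝ᵥ ψs s) * star (star ψ ⬝ᵥ ψs s))) =
        ((∑ s, q s * Complex.normSq (star (ψs s) ⬝ᵥ ψ) : ℝ) : ℂ) := by
      push_cast
      exact Finset.sum_congr rfl fun s _ => by rw [hnb s]
    rw [hL] at C1
    have : ((∑ s, q s * Complex.normSq (star (ψs s) ⬝ᵥ ψ) : ℝ) : ℂ) =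
        ((1 / (d:ℝ) : ℝ) : ℂ) := by
      rw [C1]; push_cast; rw [one_div]
    exact_mod_cast this
  have R2 : ∑ s, q s * (Complex.normSq (star φ ⬝ᵥ ψs s) *
      Complex.normSq (star (ψs s) ⬝ᵥ ψ)) = (1 + f) / ((d:ℝ) * ((d:ℝ) + 1)) := by
    have hL : (∑ s, (q s : ℂ) * ((star φ ⬝ᵥ ψs s) * (star ψ ⬝ᵥ ψs s) *
        star (star φ ⬝ᵥ ψs s) * star (star ψ ⬝ᵥ ψs s))) =
        ((∑ s, q s * (Complex.normSq (star φ ⬝ᵥ ψs s) *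
          Complex.normSq (star (ψs s) ⬝ᵥ ψ)) : ℝ) : ℂ) := by
      push_cast
      apply Finset.sum_congr rfl
      intro s _
      rw [hnb s, ← mulStarSelf (star φ ⬝ᵥ ψs s)]
      ring
    rw [hL, hcc] at C2
    have : ((∑ s, q s * (Complex.normSq (star φ ⬝ᵥ ψs s) *
        Complex.normSq (star (ψs s) ⬝ᵥ ψ)) : ℝ) : ℂ) =
        (((1 + f) / ((d:ℝ) * ((d:ℝ) + 1)) : ℝ) : ℂ) := by
      rw [C2]; push_cast; field_simp
    exact_mod_cast this
  have R3 : ∑ s, q s * (Complex.normSq (star φ ⬝ᵥ ψs s) ^ 2 *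
      Complex.normSq (star (ψs s) ⬝ᵥ ψ)) =
      (2 + 4 * f) / ((d:ℝ) * ((d:ℝ) + 1) * ((d:ℝ) + 2)) := by
    have hL : (∑ s, (q s : ℂ) * ((star φ ⬝ᵥ ψs s) * (star φ ⬝ᵥ ψs s) * (star ψ ⬝ᵥ ψs s) *
        star (star φ ⬝ᵥ ψs s) * star (star φ ⬝ᵥ ψs s) * star (star ψ ⬝ᵥ ψs s))) =
        ((∑ s, q s * (Complex.normSq (star φ ⬝ᵥ ψs s) ^ 2 *
          Complex.normSq (star (ψs s) ⬝ᵥ ψ)) : ℝ) : ℂ) := by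
      push_cast
      apply Finset.sum_congr rfl
      intro s _
      rw [hnb s, ← mulStarSelf (star φ ⬝ᵥ ψs s)]
      ring
    rw [hL, hcc] at C3
    have : ((∑ s, q s * (Complex.normSq (star φ ⬝ᵥ ψs s) ^ 2 *
        Complex.normSq (star (ψs s) ⬝ᵥ ψ)) : ℝ) : ℂ) =
        (((2 + 4 * f) / ((d:ℝ) * ((d:ℝ) + 1) * ((d:ℝ) + 2)) : ℝ) : ℂ) := by
      rw [C3]; push_cast; field_simp
    exact_mod_cast this
  -- final assembly
  constructor
  · simp only [hp, hfhat]
    have expand1 : ∀ s : ι, (q s * (d:ℝ) * Complex.normSq (star (ψs s) ⬝ᵥ ψ)) *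
        (((d:ℝ) + 1) * Complex.normSq (star φ ⬝ᵥ ψs s) - 1) =
        ((d:ℝ) * ((d:ℝ) + 1)) * (q s * (Complex.normSq (star φ ⬝ᵥ ψs s) *
          Complex.normSq (star (ψs s) ⬝ᵥ ψ))) -
        (d:ℝ) * (q s * Complex.normSq (star (ψs s) ⬝ᵥ ψ)) := by
      intro s; ring
    rw [Finset.sum_congr rfl fun s _ => expand1 s, Finset.sum_sub_distrib,
      ← Finset.mul_sum, ← Finset.mul_sum, R1, R2]
    field_simp
    ring
  · simp only [hp, hfhat]
    have expand2 : ∀ s : ι, (q s * (d:ℝ) * Complex.normSq (star (ψs s) ⬝ᵥ ψ)) *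
        (((d:ℝ) + 1) * Complex.normSq (star φ ⬝ᵥ ψs s) - 1 - f) ^ 2 =
        ((d:ℝ) * ((d:ℝ) + 1) ^ 2) * (q s * (Complex.normSq (star φ ⬝ᵥ ψs s) ^ 2 *
          Complex.normSq (star (ψs s) ⬝ᵥ ψ))) -
        (2 * (d:ℝ) * ((d:ℝ) + 1) * (1 + f)) * (q s * (Complex.normSq (star φ ⬝ᵥ ψs s) *
          Complex.normSq (star (ψs s) ⬝ᵥ ψ))) +
        ((d:ℝ) * (1 + f) ^ 2) * (q s * Complex.normSq (star (ψs s) ⬝ᵥ ψ)) := by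
      intro s; ring
    rw [Finset.sum_congr rfl fun s _ => expand2 s, Finset.sum_add_distrib,
      Finset.sum_sub_distrib, ← Finset.mul_sum, ← Finset.mul_sum, ← Finset.mul_sum,
      R1, R2, R3]
    field_simp
    ring
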